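/- Let F be a field, let A_1, …, A_l be superregular n×n matrices over F, and let B be an invertible n×n matrix over F. Then the iterated Kronecker product M = A_1 ⊗ (A_2 ⊗ (⋯ ⊗ (A_l ⊗ B))) is an n^l-block superregular matrix of size n^{l+1} × n^{l+1} over F; that is, viewing M as an n × n array of n^l × n^l blocks, every square submatrix of M consisting of full blocks is non-singular. -/

import Mathlib

/-- A matrix over a field is superregular if every square submatrix is non-singular. -/
def IsSuperregular {F : Type*} [Field F] {I J : Type*} (A : Matrix I J F) : Prop :=
  ∀ (k : ℕ), 1 ≤ k → ∀ (r : Fin k → I) (c : Fin k → J),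
    Function.Injective r → Function.Injective c →
    (Matrix.of fun i j => A (r i) (c j)).det ≠ 0

/-- A matrix made of an `m × t` array of blocks (the block index ranging over a finite type `β`)
is block superregular if every square submatrix consisting of full blocks is non-singular. -/
def IsBlockSuperregular {F : Type*} [Field F] {m t : ℕ} {β : Type*} [Fintype β]
    [DecidableEq β] (A : Matrix (Fin m × β) (Fin t × β) F) : Prop :=
  ∀ (k : ℕ), 1 ≤ k → ∀ (r : Fin k → Fin m) (c : Fin k → Fin t),
    Function.Injective r → Function.Injective c →
    (Matrix.of fun (i j : Fin k × β) => A (r i.1, i.2) (c j.1, j.2)).det ≠ 0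

/-- The index type of the iterated Kronecker product
`A 0 ⊗ (A 1 ⊗ (⋯ ⊗ (A (l-1) ⊗ B)))`, where `A i` has size `d i × d i` and `B` has
size `nb × nb`. -/
def KronIndex : (l : ℕ) → (Fin l → ℕ) → ℕ → Type
  | 0, _, nb => Fin nb
  | l + 1, d, nb => Fin (d 0) × KronIndex l (fun i => d i.succ) nb

instance instFintypeKronIndex : ∀ (l : ℕ) (d : Fin l → ℕ) (nb : ℕ),
    Fintype (KronIndex l d nb)
  | 0, _, nb => inferInstanceAs (Fintype (Fin nb))
  | l + 1, d, nb =>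
    letI := instFintypeKronIndex l (fun i => d i.succ) nb
    inferInstanceAs (Fintype (Fin (d 0) × KronIndex l (fun i => d i.succ) nb))

instance instDecidableEqKronIndex : ∀ (l : ℕ) (d : Fin l → ℕ) (nb : ℕ),
    DecidableEq (KronIndex l d nb)
  | 0, _, nb => inferInstanceAs (DecidableEq (Fin nb))
  | l + 1, d, nb =>
    letI := instDecidableEqKronIndex l (fun i => d i.succ) nb
    inferInstanceAs (DecidableEq (Fin (d 0) × KronIndex l (fun i => d i.succ) nb))

/-- The iterated Kronecker product `A 0 ⊗ (A 1 ⊗ (⋯ ⊗ (A (l-1) ⊗ B)))`. -/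
def iterKron {F : Type*} [Field F] {nb : ℕ} (B : Matrix (Fin nb) (Fin nb) F) :
    (l : ℕ) → (d : Fin l → ℕ) → (∀ i, Matrix (Fin (d i)) (Fin (d i)) F) →
      Matrix (KronIndex l d nb) (KronIndex l d nb) F
  | 0, _, _ => B
  | l + 1, d, A =>
    Matrix.kroneckerMap (· * ·) (A 0)
      (iterKron B l (fun i => d i.succ) (fun i => A i.succ))


lemma superreg_det_ne {F : Type*} [Field F] {n : ℕ} {A : Matrix (Fin n) (Fin n) F}
    (h : IsSuperregular A) : A.det ≠ 0 := by
  rcases Nat.eq_zero_or_pos n with h0 | h1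
  · subst h0
    simp [Matrix.det_fin_zero]
  · exact h n h1 id id Function.injective_id Function.injective_id

lemma kronIndex_card (l n : ℕ) :
    Fintype.card (KronIndex l (fun _ => n) n) = n ^ (l + 1) := by
  induction l with
  | zero => simp [KronIndex]; exact Fintype.card_fin n
  | succ l ih =>
    show Fintype.card (Fin n × KronIndex l (fun _ => n) n) = n ^ (l + 2)
    rw [Fintype.card_prod, Fintype.card_fin, ih]
    ring

lemma iterKron_det_ne {F : Type*} [Field F] {nb : ℕ} {B : Matrix (Fin nb) (Fin nb) F}
    (hB : B.det ≠ 0) : ∀ (l : ℕ) (d : Fin l → ℕ)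
    (A : ∀ i, Matrix (Fin (d i)) (Fin (d i)) F), (∀ i, (A i).det ≠ 0) →
    (iterKron B l d A).det ≠ 0
  | 0, _, _, _ => hB
  | l + 1, d, A, hA => by
    have ih := iterKron_det_ne hB l (fun i => d i.succ) (fun i => A i.succ)
      (fun i => hA i.succ)
    show (Matrix.kroneckerMap (· * ·) (A 0) _).det ≠ 0
    have h := Matrix.det_kronecker (A 0) (iterKron B l (fun i => d i.succ) fun i => A i.succ)
    exact fun h0 => mul_ne_zero (pow_ne_zero _ (hA 0)) (pow_ne_zero _ ih) (h.symm.trans h0)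

/-- Corollary: if `A 0, …, A l` are `(l+1)`-many `n × n` superregular matrices and `B` is an
invertible `n × n` matrix, then the iterated Kronecker product
`M = A 0 ⊗ (A 1 ⊗ (⋯ ⊗ (A l ⊗ B)))` is an `n^(l+1)`-block superregular matrix of size
`n^(l+2) × n^(l+2)`. -/
theorem iterKron_const_isBlockSuperregular {F : Type*} [Field F] {l n : ℕ}
    (A : Fin (l + 1) → Matrix (Fin n) (Fin n) F) (B : Matrix (Fin n) (Fin n) F)
    (hA : ∀ i, IsSuperregular (A i)) (hB : IsUnit B) :
    Fintype.card (KronIndex (l + 1) (fun _ => n) n) = n ^ (l + 2) ∧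
    Fintype.card (KronIndex l (fun _ => n) n) = n ^ (l + 1) ∧
    IsBlockSuperregular (iterKron B (l + 1) (fun _ => n) A) := by
  refine ⟨kronIndex_card (l + 1) n, kronIndex_card l n, ?_⟩
  intro k hk r c hr hc
  set C := iterKron B l (fun i => (fun _ => n) i.succ) (fun i => A i.succ) with hC
  have hCdet : C.det ≠ 0 :=
    iterKron_det_ne (by simpa [Matrix.isUnit_iff_isUnit_det, isUnit_iff_ne_zero] using hB)
      l _ _ (fun i => superreg_det_ne (hA i.succ))
  have heq : (Matrix.of fun (i j : Fin k × KronIndex l (fun _ => n) n) =>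
      (iterKron B (l + 1) (fun _ => n) A) (r i.1, i.2) (c j.1, j.2)) =
      Matrix.kroneckerMap (· * ·) (Matrix.of fun i j => A 0 (r i) (c j)) C := rfl
  rw [heq, Matrix.det_kronecker]
  exact mul_ne_zero (pow_ne_zero _ (hA 0 k hk r c hr hc)) (pow_ne_zero _ hCdet)
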